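/- Let l ≥ 2 and consider the (l+1)×(l+1) symmetric tridiagonal matrix A over ℚ with zero diagonal whose off-diagonal entries are A_{i,i+1} = A_{i+1,i} = 2 for 1 ≤ i ≤ l-2, and whose boundary entries satisfy (A_{0,1}, A_{l-1,l}) ∈ {(1/2, 2), (1/2, 1/2)}. Then -2 is not an eigenvalue of A. -/
import Mathlib


open Matrix

/-- Periodic coefficient sequence for the `-2`-eigenvector recurrence. -/
def dcoef : ℕ → ℚ := fun i =>
  if i % 3 = 1 then -4 else if i % 3 = 2 then 15/4 else 1/4

lemma dcoef_rec (n : ℕ) : dcoef (n+3) = -dcoef (n+2) - dcoef (n+1) := by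
  have h : n % 3 = 0 ∨ n % 3 = 1 ∨ n % 3 = 2 := by omega
  rcases h with h|h|h <;>
  · have h1 : (n+1) % 3 = (n % 3 + 1) % 3 := by omega
    have h2 : (n+2) % 3 = (n % 3 + 2) % 3 := by omega
    have h3 : (n+3) % 3 = n % 3 := by omega
    rw [dcoef, dcoef, dcoef, h1, h2, h3, h]
    norm_num

/-- For `l ≥ 2`, the `(l+1)×(l+1)` symmetric tridiagonal matrix over `ℚ` with
zero diagonal, interior off-diagonal entries `2`, and boundary entries
`(A 0 1, A (l-1) l) ∈ {(1/2, 2), (1/2, 1/2)}` does not have `-2` as an eigenvalue. -/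
theorem stmt_1 (l : ℕ) (hl : 2 ≤ l)
    (A : Matrix (Fin (l + 1)) (Fin (l + 1)) ℚ)
    (hsymm : ∀ i j, A i j = A j i)
    (hzero : ∀ i j : Fin (l + 1),
      ¬(i.val + 1 = j.val ∨ j.val + 1 = i.val) → A i j = 0)
    (hint : ∀ i j : Fin (l + 1),
      i.val + 1 = j.val → 1 ≤ i.val → i.val ≤ l - 2 → A i j = 2)
    (hbdry : (A 0 1 = 1/2 ∧ A ⟨l - 1, by omega⟩ ⟨l, by omega⟩ = 2) ∨
             (A 0 1 = 1/2 ∧ A ⟨l - 1, by omega⟩ ⟨l, by omega⟩ = 1/2)) :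
    ¬∃ v : Fin (l + 1) → ℚ, v ≠ 0 ∧ A.mulVec v = (-2 : ℚ) • v := by
  rintro ⟨v, hv, hAv⟩
  have hrow : ∀ i : Fin (l+1), (∑ j, A i j * v j) = -2 * v i := by
    intro i
    have := congrFun hAv i
    simpa [mulVec, dotProduct] using this
  have vcast : ∀ (i j : ℕ) (hi : i < l+1) (hj : j < l+1), i = j →
      v ⟨i, hi⟩ = v ⟨j, hj⟩ := by
    rintro i j hi hj rfl; rfl
  have Acast : ∀ (i j i' j' : ℕ) (hi : i < l+1) (hj : j < l+1) (hi' : i' < l+1)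
      (hj' : j' < l+1), i = i' → j = j' → A ⟨i, hi⟩ ⟨j, hj⟩ = A ⟨i', hi'⟩ ⟨j', hj'⟩ := by
    rintro i j i' j' _ _ _ _ rfl rfl; rfl
  -- boundary entries
  have hA01 : A ⟨0, by omega⟩ ⟨1, by omega⟩ = 1/2 := by
    have h0 : (0 : Fin (l+1)) = ⟨0, by omega⟩ := rfl
    have h1 : (1 : Fin (l+1)) = ⟨1, by omega⟩ := by
      apply Fin.ext
      rw [Fin.val_one', Nat.mod_eq_of_lt (by omega)]
    rcases hbdry with ⟨h, _⟩ | ⟨h, _⟩ <;> rw [← h0, ← h1] <;> exact h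
  have ha : A ⟨l-1, by omega⟩ ⟨l, by omega⟩ = 2 ∨ A ⟨l-1, by omega⟩ ⟨l, by omega⟩ = 1/2 := by
    rcases hbdry with ⟨_, h⟩ | ⟨_, h⟩
    · exact Or.inl h
    · exact Or.inr h
  -- row 0
  have eq0 : A ⟨0, by omega⟩ ⟨1, by omega⟩ * v ⟨1, by omega⟩ = -2 * v ⟨0, by omega⟩ := by
    have h := hrow ⟨0, by omega⟩
    rw [Finset.sum_eq_single (⟨1, by omega⟩ : Fin (l+1))] at h
    · exact h
    · intro b _ hb
      rw [hzero _ _ ?_, zero_mul]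
      rintro (hc | hc) <;> simp only [Fin.val_mk] at hc
      · exact hb (Fin.ext (by simp only [Fin.val_mk] <;> omega))
      · omega
    · intro hc; exact absurd (Finset.mem_univ _) hc
  -- row l
  have eqlast : A ⟨l-1, by omega⟩ ⟨l, by omega⟩ * v ⟨l-1, by omega⟩ = -2 * v ⟨l, by omega⟩ := by
    have h := hrow ⟨l, by omega⟩
    rw [Finset.sum_eq_single (⟨l-1, by omega⟩ : Fin (l+1))] at h
    · rw [hsymm ⟨l, by omega⟩ ⟨l-1, by omega⟩] at h
      exact h
    · intro b _ hb
      have hbb := b.isLt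
      rw [hzero _ _ ?_, zero_mul]
      rintro (hc | hc) <;> simp only [Fin.val_mk] at hc
      · omega
      · exact hb (Fin.ext (by simp only [Fin.val_mk] <;> omega))
    · intro hc; exact absurd (Finset.mem_univ _) hc
  -- middle rows
  have eqmid : ∀ i (h1 : 1 ≤ i) (h2 : i ≤ l - 1),
      A ⟨i-1, by omega⟩ ⟨i, by omega⟩ * v ⟨i-1, by omega⟩
        + A ⟨i, by omega⟩ ⟨i+1, by omega⟩ * v ⟨i+1, by omega⟩
        = -2 * v ⟨i, by omega⟩ := by
    intro i h1 h2
    have h := hrow ⟨i, by omega⟩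
    have hsub : ∑ j ∈ ({⟨i-1, by omega⟩, ⟨i+1, by omega⟩} : Finset (Fin (l+1))),
        A ⟨i, by omega⟩ j * v j = ∑ j, A ⟨i, by omega⟩ j * v j := by
      apply Finset.sum_subset (Finset.subset_univ _)
      intro b _ hb
      simp only [Finset.mem_insert, Finset.mem_singleton] at hb
      push_neg at hb
      rw [hzero _ _ ?_, zero_mul]
      rintro (hc | hc) <;> simp only [Fin.val_mk] at hc
      · exact hb.2 (Fin.ext (by simp only [Fin.val_mk] <;> omega))
      · exact hb.1 (Fin.ext (by simp only [Fin.val_mk] <;> omega))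
    rw [← hsub, Finset.sum_pair (Fin.ne_of_val_ne
        (by simp only [Fin.val_mk] <;> omega))] at h
    rw [hsymm ⟨i, by omega⟩ ⟨i-1, by omega⟩] at h
    exact h
  by_cases hl2 : l = 2
  · -- small case l = 2
    subst hl2
    have h1 := eqmid 1 (by omega) (by omega)
    rw [Acast (1-1) 1 0 1 (by omega) (by omega) (by omega) (by omega) (by omega) rfl,
        vcast (1-1) 0 (by omega) (by omega) (by omega),
        Acast 1 (1+1) (2-1) 2 (by omega) (by omega) (by omega) (by omega) (by omega) (by omega),
        vcast (1+1) 2 (by omega) (by omega) (by omega),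
        hA01] at h1
    have hlast := eqlast
    rw [vcast (2-1) 1 (by omega) (by omega) (by omega)] at hlast
    rw [hA01] at eq0
    have hv0 : v ⟨0, by omega⟩ = 0 := by
      rcases ha with h | h <;> rw [h] at h1 hlast <;> linarith
    have hv1 : v ⟨1, by omega⟩ = 0 := by linarith
    have hv2 : v ⟨2, by omega⟩ = 0 := by
      rcases ha with h | h <;> rw [h] at hlast <;> linarith
    apply hv
    funext j
    have hj := j.isLt
    show v j = 0
    have : j = ⟨0, by omega⟩ ∨ j = ⟨1, by omega⟩ ∨ j = ⟨2, by omega⟩ := by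
      rcases (by omega : j.val = 0 ∨ j.val = 1 ∨ j.val = 2) with h | h | h
      · exact Or.inl (Fin.ext (by simp only [Fin.val_mk] <;> omega))
      · exact Or.inr (Or.inl (Fin.ext (by simp only [Fin.val_mk] <;> omega)))
      · exact Or.inr (Or.inr (Fin.ext (by simp only [Fin.val_mk] <;> omega)))
    rcases this with h | h | h <;> rw [h]
    · exact hv0
    · exact hv1
    · exact hv2
  · -- general case l ≥ 3
    have hl3 : 3 ≤ l := by omega
    have key : ∀ i, 1 ≤ i → i ≤ l - 1 → ∀ (hi : i < l + 1),
        v ⟨i, hi⟩ = dcoef i * v ⟨0, by omega⟩ := by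
      intro i
      induction i using Nat.strong_induction_on with
      | _ i ih =>
        intro h1 h2 hi
        obtain rfl | rfl | ⟨n, rfl⟩ : i = 1 ∨ i = 2 ∨ ∃ n, i = n + 3 := by
          rcases (by omega : i = 1 ∨ i = 2 ∨ 3 ≤ i) with h | h | h
          · exact Or.inl h
          · exact Or.inr (Or.inl h)
          · exact Or.inr (Or.inr ⟨i - 3, by omega⟩)
        · rw [hA01] at eq0
          rw [show dcoef 1 = -4 by norm_num [dcoef]]
          linarith [eq0, vcast 1 1 (by omega) hi rfl]
        · have h := eqmid 1 (by omega) (by omega)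
          rw [Acast (1-1) 1 0 1 (by omega) (by omega) (by omega) (by omega) (by omega) rfl,
              vcast (1-1) 0 (by omega) (by omega) (by omega),
              vcast (1+1) 2 (by omega) hi (by omega),
              hA01] at h
          have hA12 : A ⟨1, by omega⟩ ⟨1+1, by omega⟩ = 2 :=
            hint _ _ (by simp only [Fin.val_mk] <;> omega) (by simp only [Fin.val_mk] <;> omega)
              (by simp only [Fin.val_mk] <;> omega)
          rw [hA12] at h
          have k1 := ih 1 (by omega) (by omega) (by omega) (by omega)
          rw [k1] at h
          rw [show dcoef 2 = 15/4 by norm_num [dcoef],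
              show dcoef 1 = -4 from by norm_num [dcoef]] at *
          linarith [h]
        · have h := eqmid (n+2) (by omega) (by omega)
          rw [Acast (n+2-1) (n+2) (n+1) (n+2) (by omega) (by omega) (by omega) (by omega)
                (by omega) rfl,
              vcast (n+2-1) (n+1) (by omega) (by omega) (by omega),
              vcast (n+2+1) (n+3) (by omega) hi (by omega)] at h
          have hA1 : A ⟨n+1, by omega⟩ ⟨n+2, by omega⟩ = 2 :=
            hint _ _ (by simp only [Fin.val_mk] <;> omega) (by simp only [Fin.val_mk] <;> omega)
              (by simp only [Fin.val_mk] <;> omega)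
          have hA2 : A ⟨n+2, by omega⟩ ⟨n+2+1, by omega⟩ = 2 :=
            hint _ _ (by simp only [Fin.val_mk] <;> omega) (by simp only [Fin.val_mk] <;> omega)
              (by simp only [Fin.val_mk] <;> omega)
          have k1 := ih (n+1) (by omega) (by omega) (by omega) (by omega)
          have k2 := ih (n+2) (by omega) (by omega) (by omega) (by omega)
          rw [hA1, hA2, k1, k2] at h
          rw [dcoef_rec n]
          linarith [h]
    -- last two rows
    have hbd := eqmid (l-1) (by omega) (by omega)
    rw [Acast (l-1-1) (l-1) (l-2) (l-1) (by omega) (by omega) (by omega) (by omega)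
          (by omega) rfl,
        vcast (l-1-1) (l-2) (by omega) (by omega) (by omega),
        vcast (l-1+1) l (by omega) (by omega) (by omega)] at hbd
    have hAin : A ⟨l-2, by omega⟩ ⟨l-1, by omega⟩ = 2 :=
      hint _ _ (by simp only [Fin.val_mk] <;> omega) (by simp only [Fin.val_mk] <;> omega)
        (by simp only [Fin.val_mk] <;> omega)
    have hAbd : A ⟨l-1, by omega⟩ ⟨l-1+1, by omega⟩ = A ⟨l-1, by omega⟩ ⟨l, by omega⟩ :=
      Acast _ _ _ _ _ _ _ _ rfl (by omega)
    rw [hAin, hAbd] at hbd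
    have k1 := key (l-2) (by omega) (by omega) (by omega)
    have k2 := key (l-1) (by omega) (by omega) (by omega)
    rw [k1, k2] at hbd
    -- hbd : 2 * (dcoef (l-2) * v0) + a * v ⟨l⟩ = -2 * (dcoef (l-1) * v0)
    -- eqlast : a * v ⟨l-1⟩ = -2 * v ⟨l⟩
    rw [k2] at eqlast
    have hv0 : v ⟨0, by omega⟩ = 0 := by
      rcases (by omega : (l-2) % 3 = 0 ∨ (l-2) % 3 = 1 ∨ (l-2) % 3 = 2) with hr | hr | hr <;>
        [ (have hr' : (l-1) % 3 = 1 := by omega);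
          (have hr' : (l-1) % 3 = 2 := by omega);
          (have hr' : (l-1) % 3 = 0 := by omega)] <;>
      · simp only [dcoef, hr, hr'] at hbd eqlast
        norm_num at hbd eqlast
        rw [show (⟨0, by omega⟩ : Fin (l+1)) = 0 from Fin.mk_zero]
        rcases ha with h | h <;> rw [h] at hbd eqlast <;> linarith
    have hvl1 : v ⟨l-1, by omega⟩ = 0 := by rw [k2, hv0, mul_zero]
    have hvl : v ⟨l, by omega⟩ = 0 := by
      rw [hv0] at eqlast
      rcases ha with h | h <;> rw [h] at eqlast <;> linarith
    apply hv
    funext j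
    have hj := j.isLt
    show v j = 0
    rcases (by omega : j.val = 0 ∨ j.val = l ∨ (1 ≤ j.val ∧ j.val ≤ l - 1)) with h | h | h
    · rw [show j = ⟨0, by omega⟩ from Fin.ext (by simp only [Fin.val_mk] <;> omega)]
      exact hv0
    · rw [show j = ⟨l, by omega⟩ from Fin.ext (by simp only [Fin.val_mk] <;> omega)]
      exact hvl
    · have := key j.val h.1 h.2 j.isLt
      rw [Fin.eta] at this
      rw [this, hv0, mul_zero]
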